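/- For positive even integer L₁ and positive integers j, k, the double-sum/hypergeometric reduction holds: Γ(k)/Γ(k+L₁/2) · Γ(j−1/2)/Γ(j−1/2+L₁/2) − (1/(k Γ(L₁/2))) · Γ(j+k−1/2)/Γ(j+k−1/2+L₁/2) · ₃F₂(k, j+k−1/2, 1−L₁/2; k+1, j+k−1/2+L₁/2; 1) equals Γ(j−1/2)/(Γ(L₁/2)Γ(L₁+j+k−3/2)) · Σ_{ℓ=1}^{L₁/2} Γ(j+k+ℓ−3/2)Γ(L₁−ℓ)/(Γ(j+ℓ−1/2)Γ(L₁/2−ℓ+1)). -/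

import Mathlib

open Real Finset

/-- The rising factorial (Pochhammer symbol) `(a)_ℓ` for real `a`. -/
noncomputable def poch (a : ℝ) (l : ℕ) : ℝ := (ascPochhammer ℝ l).eval a

/-- The (terminating) hypergeometric sum `₃F₂(a₁,a₂,a₃;b₁,b₂;1)`. -/
noncomputable def threeFtwo (a₁ a₂ a₃ b₁ b₂ : ℝ) : ℝ :=
  ∑' l : ℕ, poch a₁ l * poch a₂ l * poch a₃ l / (poch b₁ l * poch b₂ l * Nat.factorial l)

open Nat

lemma poch_zero (a : ℝ) : poch a 0 = 1 := by simp [poch]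

lemma poch_succ (a : ℝ) (n : ℕ) : poch a (n+1) = poch a n * (a + n) :=
  ascPochhammer_succ_eval n a

lemma poch_succ' (a : ℝ) (n : ℕ) : poch a (n+1) = a * poch (a+1) n := by
  induction n with
  | zero => simp [poch_succ, poch_zero]
  | succ n ih =>
    rw [poch_succ, ih, poch_succ]
    push_cast
    ring

lemma poch_pos {a : ℝ} (ha : 0 < a) (n : ℕ) : 0 < poch a n :=
  ascPochhammer_pos n a ha

lemma poch_ne {a : ℝ} (ha : 0 < a) (n : ℕ) : poch a n ≠ 0 := (poch_pos ha n).ne'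

lemma poch_add (a : ℝ) (s t : ℕ) : poch a (s + t) = poch a s * poch (a + s) t := by
  induction t with
  | zero => simp [poch_zero]
  | succ t ih =>
    rw [show s + (t+1) = (s+t)+1 from rfl, poch_succ, ih, poch_succ]
    push_cast
    ring

lemma poch_neg_nat (s : ℕ) : ∀ l ≤ s, poch (-(s:ℝ)) l = (-1)^l * s ! / (s - l)! := by
  intro l hl
  induction l with
  | zero => rw [poch_zero, Nat.sub_zero, pow_zero, one_mul, div_self (Nat.cast_ne_zero.mpr (Nat.factorial_ne_zero s))]
  | succ l ih =>
    have hl' : l ≤ s := Nat.le_of_succ_le hl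
    have hls : (l : ℝ) < s := by exact_mod_cast hl
    have h1 : s - l = (s - (l+1)) + 1 := by omega
    have h3 : ((s - (l + 1) : ℕ) : ℝ) + 1 = (s : ℝ) - l := by
      have : ((s - (l+1) : ℕ) : ℝ) = (s:ℝ) - (l+1) := by push_cast [Nat.cast_sub hl]; ring
      rw [this]; ring
    have hfac : (((s - l)! : ℕ) : ℝ) = ((s:ℝ) - l) * (((s - (l+1))! : ℕ) : ℝ) := by
      rw [h1, Nat.factorial_succ]; push_cast; rw [h3]
    have hfz : (((s - (l+1))! : ℕ) : ℝ) ≠ 0 := Nat.cast_ne_zero.mpr (Nat.factorial_ne_zero _)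
    have hsl : (s:ℝ) - l ≠ 0 := by linarith
    rw [poch_succ, ih hl', hfac]
    field_simp
    ring

lemma Gamma_add_nat {x : ℝ} (hx : 0 < x) (n : ℕ) :
    Real.Gamma (x + n) = Real.Gamma x * poch x n := by
  induction n with
  | zero => simp [poch_zero]
  | succ n ih =>
    have h : x + ((n+1 : ℕ) : ℝ) = (x + n) + 1 := by push_cast; ring
    have hpos : (0:ℝ) < x + n := by positivity
    rw [h, Real.Gamma_add_one hpos.ne', ih, poch_succ]; ring

noncomputable def Ssum (m n : ℕ) (k x : ℝ) : ℝ :=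
  ∑ l ∈ range (n+1), (-1:ℝ)^l * (n.choose l : ℝ) * ((k + l) * poch (x + k + l) m)⁻¹

noncomputable def Tsum (m n : ℕ) (k x : ℝ) : ℝ :=
  ∑ l ∈ Icc 1 m, ((m + n - l)! : ℝ) / ((m - l)! : ℝ) /
    (poch x l * poch (x + k + l - 1) (m + n + 1 - l))

lemma sum_Icc_one (m : ℕ) (g : ℕ → ℝ) : ∑ l ∈ Icc 1 m, g l = ∑ i ∈ range m, g (1 + i) := by
  rw [← Finset.Ico_add_one_right_eq_Icc, Finset.sum_Ico_eq_sum_range]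
  simp

lemma keyD_base (m : ℕ) (hm : 1 ≤ m) (k x : ℝ) (hk : 0 < k) (hx : 0 < x) :
    ((Nat.factorial 0 : ℕ) : ℝ) / (poch k 1 * poch x m) = Ssum m 0 k x + Tsum m 0 k x := by
  have hS : Ssum m 0 k x = (k * poch (x + k) m)⁻¹ := by
    simp [Ssum]
  have hT : Tsum m 0 k x =
      ∑ i ∈ range m, (poch x (1+i) * poch (x + k + i) (m - i))⁻¹ := by
    rw [Tsum, sum_Icc_one]
    refine Finset.sum_congr rfl fun i _ => ?_
    have h1 : (m + 0 - (1+i))! = (m - (1+i))! := by norm_num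
    have h2 : x + k + ((1+i : ℕ) : ℝ) - 1 = x + k + i := by push_cast; ring
    have h3 : m + 0 + 1 - (1+i) = m - i := by omega
    rw [h1, h2, h3, div_self (Nat.cast_ne_zero.mpr (Nat.factorial_ne_zero _)), one_div]
  -- telescoping
  have tele := Finset.sum_range_sub
    (fun i => (k * poch x i * poch (x + k + i) (m - i))⁻¹) m
  have hterm : ∀ i ∈ range m, (poch x (1+i) * poch (x + k + i) (m - i))⁻¹ =
      (k * poch x (i+1) * poch (x + k + ((i+1:ℕ):ℝ)) (m - (i+1)))⁻¹
      - (k * poch x i * poch (x + k + i) (m - i))⁻¹ := by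
    intro i hi
    have him : i < m := Finset.mem_range.mp hi
    have hmi : m - i = (m - (i+1)) + 1 := by omega
    have hP := poch_pos hx i
    have ha : (0:ℝ) < x + i := by positivity
    have hd : (0:ℝ) < x + k + i := by positivity
    have hQ := poch_pos (show (0:ℝ) < x + k + i + 1 by positivity) (m - (i+1))
    have e1 : poch x (1+i) = poch x i * (x + i) := by rw [add_comm 1 i]; exact poch_succ x i
    have e2 : poch (x + k + i) (m - i) = (x + k + i) * poch (x + k + i + 1) (m - (i+1)) := by
      rw [hmi, poch_succ']
    have e3 : x + k + ((i+1:ℕ):ℝ) = x + k + i + 1 := by push_cast; ring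
    have e4 : poch x (i+1) = poch x i * (x + i) := poch_succ x i
    rw [e1, e2, e3, e4]
    field_simp
    ring
  rw [hS, hT, Finset.sum_congr rfl hterm, tele]
  have h0 : poch x 0 = 1 := poch_zero x
  have hm0 : m - m = 0 := by omega
  have hmm : poch (x + k + m) (m - m) = 1 := by rw [hm0, poch_zero]
  have h1 : poch k 1 = k := by rw [show (1:ℕ) = 0 + 1 from rfl, poch_succ, poch_zero]; simp
  rw [hmm, h0, h1]
  simp [Nat.factorial]

lemma alt_sum_step (n : ℕ) (f : ℕ → ℝ) :
    ∑ l ∈ range (n+2), (-1:ℝ)^l * ((n+1).choose l : ℝ) * f l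
      = ∑ l ∈ range (n+1), (-1:ℝ)^l * (n.choose l : ℝ) * f l
        - ∑ l ∈ range (n+1), (-1:ℝ)^l * (n.choose l : ℝ) * f (l+1) := by
  rw [Finset.sum_range_succ' (fun l => (-1:ℝ)^l * ((n+1).choose l : ℝ) * f l) (n+1),
      Finset.sum_range_succ' (fun l => (-1:ℝ)^l * (n.choose l : ℝ) * f l) n]
  have hlast : ∑ l ∈ range (n+1), (-1:ℝ)^l * (n.choose (l+1) : ℝ) * f (l+1)
      = ∑ l ∈ range n, (-1:ℝ)^l * (n.choose (l+1) : ℝ) * f (l+1) := by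
    rw [Finset.sum_range_succ, Nat.choose_succ_self]
    simp
  have hsplit : ∑ l ∈ range (n+1), (-1:ℝ)^(l+1) * ((n+1).choose (l+1) : ℝ) * f (l+1)
      = -(∑ l ∈ range (n+1), (-1:ℝ)^l * (n.choose l : ℝ) * f (l+1))
        - ∑ l ∈ range (n+1), (-1:ℝ)^l * (n.choose (l+1) : ℝ) * f (l+1) := by
    rw [← Finset.sum_neg_distrib, ← Finset.sum_sub_distrib]
    refine Finset.sum_congr rfl fun l _ => ?_
    rw [Nat.choose_succ_succ]
    push_cast
    ring
  rw [hsplit, hlast]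
  have hneg : ∑ x ∈ range n, (-1:ℝ)^(x+1) * (n.choose (x+1) : ℝ) * f (x+1)
      = -∑ x ∈ range n, (-1:ℝ)^x * (n.choose (x+1) : ℝ) * f (x+1) := by
    rw [← Finset.sum_neg_distrib]
    exact Finset.sum_congr rfl fun l _ => by ring
  rw [hneg]
  simp only [Nat.choose_zero_right, Nat.cast_one, pow_zero]
  ring

lemma Ssum_step (m n : ℕ) (k x : ℝ) :
    Ssum m (n+1) k x = Ssum m n k x - Ssum m n (k+1) x := by
  have hshift : Ssum m n (k+1) x
      = ∑ l ∈ range (n+1), (-1:ℝ)^l * (n.choose l : ℝ)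
          * ((k + ((l+1:ℕ):ℝ)) * poch (x + k + ((l+1:ℕ):ℝ)) m)⁻¹ := by
    refine Finset.sum_congr rfl fun l _ => ?_
    have e1 : k + 1 + (l:ℝ) = k + ((l+1:ℕ):ℝ) := by push_cast; ring
    have e2 : x + (k+1) + (l:ℝ) = x + k + ((l+1:ℕ):ℝ) := by push_cast; ring
    rw [e1, e2]
  rw [Ssum, hshift, Ssum]
  exact alt_sum_step n (fun l => ((k + (l:ℝ)) * poch (x + k + (l:ℝ)) m)⁻¹)

lemma Tsum_step (m n : ℕ) (k x : ℝ) (hk : 0 < k) (hx : 0 < x) :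
    Tsum m (n+1) k x = Tsum m n k x - Tsum m n (k+1) x := by
  rw [Tsum, Tsum, Tsum, ← Finset.sum_sub_distrib]
  refine Finset.sum_congr rfl fun l hl => ?_
  obtain ⟨hl1, hlm⟩ := Finset.mem_Icc.mp hl
  set M := m + n + 1 - l with hM
  have hl1R : (1:ℝ) ≤ l := by exact_mod_cast hl1
  have hd : (0:ℝ) < x + k + l - 1 := by linarith
  set d := x + k + (l:ℝ) - 1 with hdd
  have hMl : m + (n+1) + 1 - l = M + 1 := by omega
  have hMc : ((M:ℕ):ℝ) = (m:ℝ) + n + 1 - l := by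
    rw [hM, Nat.cast_sub (by omega)]; push_cast; ring
  have hfacs : m + (n+1) - l = (m + n - l) + 1 := by omega
  have hfac : ((m + (n+1) - l)! : ℝ) = ((m + n - l)! : ℝ) * (M:ℝ) := by
    rw [hfacs, Nat.factorial_succ, hM]
    have : ((m + n - l + 1 : ℕ) : ℝ) = ((m + n + 1 - l : ℕ) : ℝ) := by congr 1; omega
    push_cast [← this]
    ring
  have hA : poch d (M+1) = poch d M * (d + M) := poch_succ d M
  have hB : poch d (M+1) = d * poch (d+1) M := poch_succ' d M
  have hApos := poch_pos hd M
  have hBpos := poch_pos (show (0:ℝ) < d + 1 by linarith) M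
  have hPpos := poch_pos hx l
  have hdM : (0:ℝ) < d + M := by
    have : (0:ℝ) ≤ (M:ℝ) := Nat.cast_nonneg M
    linarith
  have hBval : poch (d+1) M = poch d M * (d + M) / d := by
    rw [eq_div_iff hd.ne', ← hA, hB]; ring
  have e2 : x + (k+1) + (l:ℝ) - 1 = d + 1 := by rw [hdd]; ring
  rw [hMl, hA, hfac, e2, hBval]
  have hFm : ((m - l)! : ℝ) ≠ 0 := Nat.cast_ne_zero.mpr (Nat.factorial_ne_zero _)
  field_simp [hPpos.ne', hApos.ne', hd.ne', hdM.ne', hFm]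
  ring

lemma keyD (m : ℕ) (hm : 1 ≤ m) : ∀ n : ℕ, ∀ k x : ℝ, 0 < k → 0 < x →
    ((n)! : ℝ) / (poch k (n+1) * poch x m) = Ssum m n k x + Tsum m n k x := by
  intro n
  induction n with
  | zero => exact fun k x hk hx => keyD_base m hm k x hk hx
  | succ n ih =>
    intro k x hk hx
    have h1 := ih k x hk hx
    have h2 := ih (k+1) x (by linarith) hx
    have hApos := poch_pos hk (n+1)
    have hBpos := poch_pos (show (0:ℝ) < k+1 by linarith) (n+1)
    have hXpos := poch_pos hx m
    have hknn : (0:ℝ) < k + (n+1) := by positivity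
    have hrel : k * poch (k+1) (n+1) = poch k (n+1) * (k + ((n+1:ℕ):ℝ)) := by
      rw [← poch_succ', ← poch_succ]
    have hBval : poch (k+1) (n+1) = poch k (n+1) * (k + n + 1) / k := by
      rw [eq_div_iff hk.ne', mul_comm _ k, hrel]; push_cast; ring
    have hL : (((n+1))! : ℝ) / (poch k (n+2) * poch x m)
        = ((n)! : ℝ) / (poch k (n+1) * poch x m)
          - ((n)! : ℝ) / (poch (k+1) (n+1) * poch x m) := by
      rw [poch_succ, hBval, Nat.factorial_succ]
      push_cast
      field_simp [hApos.ne', hXpos.ne', hknn.ne']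
      ring
    rw [Ssum_step, Tsum_step m n k x hk hx, hL, h1, h2]
    ring

lemma threeFtwo_eval (m : ℕ) (hm : 1 ≤ m) (k x : ℝ) :
    threeFtwo k (x + k) (1 - (m:ℝ)) (k + 1) (x + k + m)
      = ∑ l ∈ range m, poch k l * poch (x+k) l * poch (1-(m:ℝ)) l /
          (poch (k+1) l * poch (x+k+(m:ℝ)) l * ((l)! : ℝ)) := by
  rw [threeFtwo]
  apply tsum_eq_sum
  intro l hl
  have hlm : m ≤ l := by
    by_contra h
    exact hl (Finset.mem_range.mpr (by omega))
  have hz : poch (1 - (m:ℝ)) l = 0 := by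
    have h1 : (1:ℝ) - m = -(((m-1:ℕ)):ℝ) := by
      rw [Nat.cast_sub hm]; push_cast; ring
    rw [h1]
    exact ascPochhammer_eval_neg_coe_nat_of_lt (show m-1 < l by omega)
  rw [hz]
  simp

lemma lhs_sum (m : ℕ) (hm : 1 ≤ m) (k x : ℝ) (hk : 0 < k) (hx : 0 < x) :
    1/(k * (((m-1))! : ℝ)) * (1 / poch (x+k) m) *
      (∑ l ∈ range m, poch k l * poch (x+k) l * poch (1-(m:ℝ)) l /
        (poch (k+1) l * poch (x+k+(m:ℝ)) l * ((l)! : ℝ)))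
    = 1/(((m-1))! : ℝ) * Ssum m (m-1) k x := by
  rw [Ssum, show (m-1)+1 = m by omega, Finset.mul_sum, Finset.mul_sum]
  refine Finset.sum_congr rfl fun l hl => ?_
  have hlm : l ≤ m - 1 := by have := Finset.mem_range.mp hl; omega
  have hpn : poch (1 - (m:ℝ)) l = (-1)^l * (((m-1))! : ℝ) / (((m-1-l))! : ℝ) := by
    have h1 : (1:ℝ) - m = -(((m-1:ℕ)):ℝ) := by rw [Nat.cast_sub hm]; push_cast; ring
    rw [h1, poch_neg_nat (m-1) l hlm]
  have hkl : poch (k+1) l = poch k l * (k + l) / k := by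
    rw [eq_div_iff hk.ne', mul_comm _ k, ← poch_succ', ← poch_succ]
  have hxkm : poch (x+k+(m:ℝ)) l
      = poch (x+k) l * poch (x+k+(l:ℝ)) m / poch (x+k) m := by
    rw [eq_div_iff (poch_ne (by positivity) m)]
    have a1 := poch_add (x+k) l m
    have a2 := poch_add (x+k) m l
    rw [add_comm m l] at a2
    rw [← a1, a2]
    ring
  have hch : (((m-1).choose l : ℕ) : ℝ) * ((l)! : ℝ) * (((m-1-l))! : ℝ)
      = (((m-1))! : ℝ) := by
    exact_mod_cast congrArg (Nat.cast (R := ℝ)) (Nat.choose_mul_factorial_mul_factorial hlm)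
  have hkpos := poch_pos hk l
  have hklpos : (0:ℝ) < k + l := by positivity
  have hxk := poch_pos (show (0:ℝ) < x + k by positivity) l
  have hxkm' := poch_pos (show (0:ℝ) < x + k by positivity) m
  have hxkl := poch_pos (show (0:ℝ) < x + k + l by positivity) m
  have hfl : ((l)! : ℝ) ≠ 0 := Nat.cast_ne_zero.mpr (Nat.factorial_ne_zero _)
  have hfml : (((m-1-l))! : ℝ) ≠ 0 := Nat.cast_ne_zero.mpr (Nat.factorial_ne_zero _)
  have hfm : (((m-1))! : ℝ) ≠ 0 := Nat.cast_ne_zero.mpr (Nat.factorial_ne_zero _)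
  rw [hpn, hkl, hxkm]
  field_simp
  linear_combination -hch

lemma rhs_sum (m K : ℕ) (hm : 1 ≤ m) (hK : 1 ≤ K) (x : ℝ) (hx : 0 < x) :
    Real.Gamma x / ((((m-1))! : ℝ) * Real.Gamma (x + (K:ℝ) + 2*(m:ℝ) - 1)) *
      ∑ l ∈ Icc 1 m, Real.Gamma (x + (K:ℝ) + (l:ℝ) - 1) * Real.Gamma (2*(m:ℝ) - (l:ℝ)) /
        (Real.Gamma (x + (l:ℝ)) * Real.Gamma ((m:ℝ) - (l:ℝ) + 1))
    = 1/(((m-1))! : ℝ) * Tsum m (m-1) (K:ℝ) x := by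
  rw [Tsum, Finset.mul_sum, Finset.mul_sum]
  refine Finset.sum_congr rfl fun l hl => ?_
  obtain ⟨h1l, hlm⟩ := Finset.mem_Icc.mp hl
  have h1lR : (1:ℝ) ≤ (l:ℝ) := by exact_mod_cast h1l
  have hKR : (1:ℝ) ≤ (K:ℝ) := by exact_mod_cast hK
  have hd : (0:ℝ) < x + (K:ℝ) + (l:ℝ) - 1 := by linarith
  have e1 : x + (K:ℝ) + 2*(m:ℝ) - 1 = (x + (K:ℝ) + (l:ℝ) - 1) + ((2*m - l : ℕ):ℝ) := by
    rw [Nat.cast_sub (by omega)]; push_cast; ring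
  have g1 : Real.Gamma (x + (K:ℝ) + 2*(m:ℝ) - 1)
      = Real.Gamma (x + (K:ℝ) + (l:ℝ) - 1) * poch (x + (K:ℝ) + (l:ℝ) - 1) (2*m-l) := by
    rw [e1]; exact Gamma_add_nat hd _
  have g2 : Real.Gamma (x + (l:ℝ)) = Real.Gamma x * poch x l := Gamma_add_nat hx l
  have g3 : Real.Gamma (2*(m:ℝ) - (l:ℝ)) = (((2*m - l - 1))! : ℝ) := by
    have e : 2*(m:ℝ) - (l:ℝ) = ((2*m - l - 1 : ℕ):ℝ) + 1 := by
      rw [Nat.cast_sub (by omega), Nat.cast_sub (by omega)]; push_cast; ring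
    rw [e, Real.Gamma_nat_eq_factorial]
  have g4 : Real.Gamma ((m:ℝ) - (l:ℝ) + 1) = (((m - l))! : ℝ) := by
    have e : (m:ℝ) - (l:ℝ) + 1 = ((m - l : ℕ):ℝ) + 1 := by
      rw [Nat.cast_sub hlm]
    rw [e, Real.Gamma_nat_eq_factorial]
  have i1 : m + (m-1) - l = 2*m - l - 1 := by omega
  have i2 : m + (m-1) + 1 - l = 2*m - l := by omega
  rw [g1, g2, g3, g4, i1, i2]
  have hGx : Real.Gamma x ≠ 0 := (Real.Gamma_pos_of_pos hx).ne'
  have hGd : Real.Gamma (x + (K:ℝ) + (l:ℝ) - 1) ≠ 0 := (Real.Gamma_pos_of_pos hd).ne'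
  have hp1 : poch (x + (K:ℝ) + (l:ℝ) - 1) (2*m-l) ≠ 0 := poch_ne hd _
  have hp2 : poch x l ≠ 0 := poch_ne hx _
  have hf1 : (((m-1))! : ℝ) ≠ 0 := Nat.cast_ne_zero.mpr (Nat.factorial_ne_zero _)
  have hf2 : (((m-l))! : ℝ) ≠ 0 := Nat.cast_ne_zero.mpr (Nat.factorial_ne_zero _)
  field_simp

/-- For a positive even integer `L₁` and positive integers `j, k`, the hypergeometric
evaluation of the Meijer G-function reduces to a finite sum of ratios of gamma functions:
`Γ(k)/Γ(k+L₁/2) Γ(j−1/2)/Γ(j−1/2+L₁/2) − (1/(k Γ(L₁/2))) Γ(j+k−1/2)/Γ(j+k−1/2+L₁/2)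
  ₃F₂(k, j+k−1/2, 1−L₁/2; k+1, j+k−1/2+L₁/2; 1)
  = Γ(j−1/2)/(Γ(L₁/2)Γ(L₁+j+k−3/2)) Σ_{ℓ=1}^{L₁/2}
     Γ(j+k+ℓ−3/2)Γ(L₁−ℓ)/(Γ(j+ℓ−1/2)Γ(L₁/2−ℓ+1))`. -/
theorem meijerG_reduction_even (L₁ j k : ℕ) (hL : 0 < L₁) (hLeven : Even L₁)
    (hj : 0 < j) (hk : 0 < k) :
    Real.Gamma k / Real.Gamma ((k : ℝ) + L₁ / 2) *
        (Real.Gamma ((j : ℝ) - 1 / 2) / Real.Gamma ((j : ℝ) - 1 / 2 + L₁ / 2)) -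
      1 / ((k : ℝ) * Real.Gamma ((L₁ : ℝ) / 2)) *
        (Real.Gamma ((j : ℝ) + k - 1 / 2) / Real.Gamma ((j : ℝ) + k - 1 / 2 + L₁ / 2)) *
        threeFtwo k ((j : ℝ) + k - 1 / 2) (1 - (L₁ : ℝ) / 2)
          ((k : ℝ) + 1) ((j : ℝ) + k - 1 / 2 + (L₁ : ℝ) / 2)
      = Real.Gamma ((j : ℝ) - 1 / 2) /
          (Real.Gamma ((L₁ : ℝ) / 2) * Real.Gamma ((L₁ : ℝ) + j + k - 3 / 2)) *
        ∑ l ∈ Finset.Icc 1 (L₁ / 2),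
          Real.Gamma ((j : ℝ) + k + l - 3 / 2) * Real.Gamma ((L₁ : ℝ) - l) /
            (Real.Gamma ((j : ℝ) + l - 1 / 2) * Real.Gamma ((L₁ : ℝ) / 2 - l + 1)) := by
  obtain ⟨mm, hmm2⟩ := hLeven
  have hm : 1 ≤ mm := by omega
  have hL2 : L₁ / 2 = mm := by omega
  have hcL : (L₁:ℝ) = 2*(mm:ℝ) := by rw [hmm2]; push_cast; ring
  have hLhalf : (L₁:ℝ)/2 = (mm:ℝ) := by rw [hcL]; ring
  have hjR : (1:ℝ) ≤ (j:ℝ) := by exact_mod_cast hj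
  have hkR : (0:ℝ) < (k:ℝ) := by exact_mod_cast hk
  set x : ℝ := (j:ℝ) - 1/2 with hxdef
  have hx : 0 < x := by rw [hxdef]; linarith
  rw [hL2]
  simp only [hcL]
  have h22 : 2*(mm:ℝ)/2 = (mm:ℝ) := by ring
  simp only [h22]
  have hGk : Real.Gamma (k:ℝ) ≠ 0 := (Real.Gamma_pos_of_pos hkR).ne'
  have hGx : Real.Gamma x ≠ 0 := (Real.Gamma_pos_of_pos hx).ne'
  have hGxk : Real.Gamma (x + (k:ℝ)) ≠ 0 :=
    (Real.Gamma_pos_of_pos (by positivity)).ne'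
  have gm : Real.Gamma (mm:ℝ) = (((mm-1))! : ℝ) := by
    have e : (mm:ℝ) = ((mm-1:ℕ):ℝ) + 1 := by rw [Nat.cast_sub hm]; push_cast; ring
    rw [e, Real.Gamma_nat_eq_factorial]
  have gr1 : Real.Gamma (k:ℝ) / Real.Gamma ((k:ℝ) + (mm:ℝ)) = 1 / poch (k:ℝ) mm := by
    rw [Gamma_add_nat hkR mm, ← div_div, div_self hGk]
  have gr2 : Real.Gamma x / Real.Gamma (x + (mm:ℝ)) = 1 / poch x mm := by
    rw [Gamma_add_nat hx mm, ← div_div, div_self hGx]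
  have e3 : (j:ℝ) + (k:ℝ) - 1/2 = x + (k:ℝ) := by rw [hxdef]; ring
  have e4 : (j:ℝ) + (k:ℝ) - 1/2 + (mm:ℝ) = x + (k:ℝ) + (mm:ℝ) := by rw [hxdef]; ring
  have gr3 : Real.Gamma (x + (k:ℝ)) / Real.Gamma (x + (k:ℝ) + (mm:ℝ))
      = 1 / poch (x + (k:ℝ)) mm := by
    rw [Gamma_add_nat (show (0:ℝ) < x + (k:ℝ) by positivity) mm, ← div_div,
      div_self hGxk]
  rw [gr1, gr2, e3, gr3, gm, threeFtwo_eval mm hm (k:ℝ) x,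
    lhs_sum mm hm (k:ℝ) x hkR hx]
  -- RHS
  have hRsum : ∑ l ∈ Icc 1 mm,
      Real.Gamma ((j:ℝ) + (k:ℝ) + (l:ℝ) - 3/2) * Real.Gamma (2*(mm:ℝ) - (l:ℝ)) /
        (Real.Gamma ((j:ℝ) + (l:ℝ) - 1/2) * Real.Gamma ((mm:ℝ) - (l:ℝ) + 1))
      = ∑ l ∈ Icc 1 mm,
      Real.Gamma (x + (k:ℝ) + (l:ℝ) - 1) * Real.Gamma (2*(mm:ℝ) - (l:ℝ)) /
        (Real.Gamma (x + (l:ℝ)) * Real.Gamma ((mm:ℝ) - (l:ℝ) + 1)) := by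
    refine Finset.sum_congr rfl fun l _ => ?_
    rw [show (j:ℝ) + (k:ℝ) + (l:ℝ) - 3/2 = x + (k:ℝ) + (l:ℝ) - 1 from by rw [hxdef]; ring,
      show (j:ℝ) + (l:ℝ) - 1/2 = x + (l:ℝ) from by rw [hxdef]; ring]
  have e5 : 2*(mm:ℝ) + (j:ℝ) + (k:ℝ) - 3/2 = x + (k:ℝ) + 2*(mm:ℝ) - 1 := by
    rw [hxdef]; ring
  rw [e5, hRsum, rhs_sum mm k hm hk x hx]
  -- finish with keyD
  have hkey := keyD mm hm (mm-1) (k:ℝ) x hkR hx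
  rw [show mm-1+1 = mm from by omega] at hkey
  have hpk := poch_pos hkR mm
  have hpx := poch_pos hx mm
  have hf : (((mm-1))! : ℝ) ≠ 0 := Nat.cast_ne_zero.mpr (Nat.factorial_ne_zero _)
  rw [div_eq_iff (by positivity : poch (k:ℝ) mm * poch x mm ≠ 0)] at hkey
  field_simp
  linear_combination hkey
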